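/- Let n ≥ 2 and let f : ℝⁿ → ℝ be continuous, nonnegative and Lebesgue integrable with α := ∫_{ℝⁿ} f dx < c_n, such that y ↦ log(|y|/|x−y|) f(y) is Lebesgue integrable for every x ∈ ℝⁿ. Set u₊(x) := (1/c_n) ∫_{ℝⁿ} log(|y|/|x−y|) f(y) dy. Then e^{n u₊} is an A₁ weight: there exists a constant C depending only on n and α such that for every x ∈ ℝⁿ and every r > 0, (1/|B(x,r)|) ∫_{B(x,r)} e^{n u₊(y)} dy ≤ C e^{n u₊(x)}; equivalently, the Hardy–Littlewood maximal function satisfies M(e^{n u₊})(x) ≤ C e^{n u₊(x)} for every x ∈ ℝⁿ. -/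

import Mathlib

open MeasureTheory Metric Set
open scoped ENNReal

/-- `c_n := 2^{n-2} Γ(n/2) π^{n/2}`. -/
noncomputable def cN (n : ℕ) : ℝ :=
  (2 : ℝ) ^ ((n : ℝ) - 2) * Real.Gamma ((n : ℝ) / 2) * Real.pi ^ ((n : ℝ) / 2)

/-- Logarithmic potential `u(x) = (1/c_n) ∫ log(|y|/|x-y|) f(y) dy`. -/
noncomputable def logPot (n : ℕ) (f : EuclideanSpace ℝ (Fin n) → ℝ)
    (x : EuclideanSpace ℝ (Fin n)) : ℝ :=
  (1 / cN n) * ∫ y, Real.log (‖y‖ / ‖x - y‖) * f y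

/-- `ω` is an `A_p` weight with constant `K` (for `p > 1`):
for every ball `B`, `(⨍_B ω) · (⨍_B ω^{-1/(p-1)})^{p-1} ≤ K`. -/
def IsApWeight (n : ℕ) (p K : ℝ) (ω : EuclideanSpace ℝ (Fin n) → ℝ) : Prop :=
  ∀ (x : EuclideanSpace ℝ (Fin n)) (r : ℝ), 0 < r →
    ((volume (ball x r)).toReal⁻¹ * ∫ y in ball x r, ω y) *
      ((volume (ball x r)).toReal⁻¹ *
        ∫ y in ball x r, (ω y) ^ (-(1 / (p - 1)) : ℝ)) ^ (p - 1) ≤ K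

/-- `δ_ω(x,y) = (∫_{B_{xy}} ω)^{1/n}`, where `B_{xy}` is the closed ball with
center `(x+y)/2` and radius `|x-y|/2`. -/
noncomputable def deltaW (n : ℕ) (ω : EuclideanSpace ℝ (Fin n) → ℝ)
    (x y : EuclideanSpace ℝ (Fin n)) : ℝ :=
  (∫ z in closedBall (midpoint ℝ x y) (dist x y / 2), ω z) ^ ((1 : ℝ) / n)

/-- `d_ω(x,y)`: infimum of `∫₀^L ω(γ(t))^{1/n} dt` over all `L ≥ 0` and all
1-Lipschitz curves `γ : [0,L] → ℝⁿ` joining `x` to `y` inside `B_{xy}`. -/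
noncomputable def dW (n : ℕ) (ω : EuclideanSpace ℝ (Fin n) → ℝ)
    (x y : EuclideanSpace ℝ (Fin n)) : ℝ :=
  sInf {d : ℝ | ∃ (L : ℝ) (γ : ℝ → EuclideanSpace ℝ (Fin n)),
    0 ≤ L ∧ LipschitzOnWith 1 γ (Set.Icc 0 L) ∧ γ 0 = x ∧ γ L = y ∧
    (∀ t ∈ Set.Icc 0 L, γ t ∈ closedBall (midpoint ℝ x y) (dist x y / 2)) ∧
    d = ∫ t in (0 : ℝ)..L, (ω (γ t)) ^ ((1 : ℝ) / n)}

/-- One-dimensional Hausdorff content: infimum of `Σᵢ diam Bᵢ` over countable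
covers of `E` by balls `Bᵢ`. -/
noncomputable def H1content {n : ℕ} (E : Set (EuclideanSpace ℝ (Fin n))) : ℝ≥0∞ :=
  ⨅ (c : ℕ → EuclideanSpace ℝ (Fin n) × ℝ) (_ : E ⊆ ⋃ i, ball (c i).1 (c i).2),
    ∑' i, ENNReal.ofReal (2 * (c i).2)

private lemma exp_tangent (m t : ℝ) : Real.exp m * (1 + t - m) ≤ Real.exp t := by
  have h := Real.add_one_le_exp (t - m)
  calc Real.exp m * (1 + t - m) = Real.exp m * ((t - m) + 1) := by ring
    _ ≤ Real.exp m * Real.exp (t - m) :=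
        mul_le_mul_of_nonneg_left h (Real.exp_nonneg m)
    _ = Real.exp t := by rw [← Real.exp_add]; ring_nf

private lemma half_rpow {β X : ℝ} (hX : 0 < X) : (X / 2) ^ (-β) = X ^ (-β) * 2 ^ β := by
  rw [Real.div_rpow hX.le (by norm_num : (0:ℝ) ≤ 2),
    Real.rpow_neg (by norm_num : (0:ℝ) ≤ 2)]
  rw [div_inv_eq_mul]

private lemma ofReal_integral_le {α : Type*} [MeasurableSpace α] {μ : Measure α} {g : α → ℝ}
    (hg : Integrable g μ) : ENNReal.ofReal (∫ a, g a ∂μ) ≤ ∫⁻ a, ENNReal.ofReal (g a) ∂μ := by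
  have h1 : ∫ a, g a ∂μ ≤ ∫ a, max (g a) 0 ∂μ :=
    integral_mono hg hg.pos_part fun a => le_max_left _ _
  calc ENNReal.ofReal (∫ a, g a ∂μ) ≤ ENNReal.ofReal (∫ a, max (g a) 0 ∂μ) :=
        ENNReal.ofReal_le_ofReal h1
    _ = ∫⁻ a, ENNReal.ofReal (max (g a) 0) ∂μ :=
        ofReal_integral_eq_lintegral_ofReal hg.pos_part (ae_of_all _ fun a => le_max_right _ _)
    _ = ∫⁻ a, ENNReal.ofReal (g a) ∂μ := by
        refine lintegral_congr fun a => ?_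
        rcases le_total (g a) 0 with h | h
        · simp [max_eq_right h, ENNReal.ofReal_of_nonpos h]
        · rw [max_eq_left h]

private lemma cN_pos {n : ℕ} (hn : 2 ≤ n) : 0 < cN n := by
  have h2 : (2:ℝ) ≤ (n:ℝ) := by exact_mod_cast hn
  exact mul_pos (mul_pos (Real.rpow_pos_of_pos two_pos _)
    (Real.Gamma_pos_of_pos (by linarith))) (Real.rpow_pos_of_pos Real.pi_pos _)

private lemma core_rpow_ball {n : ℕ} (hn : 2 ≤ n) {β : ℝ} (hβ0 : 0 ≤ β) {R : ℝ} (hR : 0 < R) :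
    ∫⁻ y in ball (0 : EuclideanSpace ℝ (Fin n)) R, ENNReal.ofReal (‖y‖ ^ (-β)) ≤
      ENNReal.ofReal (R ^ (-β) * R ^ n * 2 ^ β) *
        (1 - ENNReal.ofReal ((2:ℝ) ^ β / 2 ^ n))⁻¹ *
          volume (ball (0 : EuclideanSpace ℝ (Fin n)) 1) := by
  haveI : Nonempty (Fin n) := ⟨⟨0, by omega⟩⟩
  set V := EuclideanSpace ℝ (Fin n) with hV
  set s : ℕ → Set V := fun k => ball (0:V) (R / 2 ^ k) \ ball (0:V) (R / 2 ^ (k + 1)) with hs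
  have hcover : ball (0:V) R ⊆ {(0:V)} ∪ ⋃ k, s k := by
    intro y hy
    rw [mem_ball_zero_iff] at hy
    by_cases h0 : y = 0
    · exact mem_union_left _ (by simp [h0])
    · have hy0 : 0 < ‖y‖ := norm_pos_iff.2 h0
      have hex : ∃ k : ℕ, R / 2 ^ (k + 1) ≤ ‖y‖ := by
        obtain ⟨k, hk⟩ : ∃ k : ℕ, R / ‖y‖ < 2 ^ k := pow_unbounded_of_one_lt _ one_lt_two
        refine ⟨k, ?_⟩
        rw [div_le_iff₀ (by positivity)]
        rw [div_lt_iff₀ hy0] at hk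
        have h2 : (2:ℝ) ^ k ≤ 2 ^ (k + 1) :=
          pow_le_pow_right₀ (by norm_num) (Nat.le_succ k)
        nlinarith
      refine mem_union_right _ (mem_iUnion.2 ⟨Nat.find hex, ?_, ?_⟩)
      · rw [mem_ball_zero_iff]
        rcases hk : Nat.find hex with _ | j
        · simpa using hy
        · have hmin := Nat.find_min hex (m := j) (by omega)
          push_neg at hmin
          exact hmin
      · rw [mem_ball_zero_iff]
        exact not_lt.2 (Nat.find_spec hex)
  have hterm : ∀ k, ∫⁻ y in s k, ENNReal.ofReal (‖y‖ ^ (-β)) ≤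
      ENNReal.ofReal ((R / 2 ^ (k+1)) ^ (-β) * (R / 2 ^ k) ^ n) * volume (ball (0:V) 1) := by
    intro k
    have hpos : (0:ℝ) < R / 2 ^ (k+1) := by positivity
    calc ∫⁻ y in s k, ENNReal.ofReal (‖y‖ ^ (-β))
        ≤ ∫⁻ _ in s k, ENNReal.ofReal ((R / 2 ^ (k+1)) ^ (-β)) := by
          refine setLIntegral_mono' (measurableSet_ball.diff measurableSet_ball) fun y hy => ?_
          refine ENNReal.ofReal_le_ofReal (Real.rpow_le_rpow_of_nonpos hpos ?_ (neg_nonpos.2 hβ0))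
          have := hy.2
          rw [mem_ball_zero_iff] at this
          exact le_of_not_gt this
      _ = ENNReal.ofReal ((R / 2 ^ (k+1)) ^ (-β)) * volume (s k) := setLIntegral_const _ _
      _ ≤ ENNReal.ofReal ((R / 2 ^ (k+1)) ^ (-β)) * volume (ball (0:V) (R / 2 ^ k)) :=
          mul_le_mul_right (measure_mono diff_subset) _
      _ = ENNReal.ofReal ((R / 2 ^ (k+1)) ^ (-β)) *
            (ENNReal.ofReal ((R / 2 ^ k) ^ n) * volume (ball (0:V) 1)) := by
          rw [Measure.addHaar_ball volume _ (by positivity : (0:ℝ) ≤ R / 2 ^ k)]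
          rw [finrank_euclideanSpace_fin]
      _ = ENNReal.ofReal ((R / 2 ^ (k+1)) ^ (-β) * (R / 2 ^ k) ^ n) * volume (ball (0:V) 1) := by
          rw [← mul_assoc, ← ENNReal.ofReal_mul (by positivity)]
  have hgeo : ∀ k : ℕ, (R / 2 ^ (k+1)) ^ (-β) * (R / 2 ^ k : ℝ) ^ n =
      (R ^ (-β) * R ^ n * 2 ^ β) * ((2:ℝ) ^ β / 2 ^ n) ^ k := by
    intro k
    induction k with
    | zero => simp [half_rpow hR]; ring
    | succ j ih =>
      have e1 : R / 2 ^ (j + 1 + 1) = (R / 2 ^ (j + 1)) / 2 := by rw [pow_succ]; ring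
      have e2 : R / 2 ^ (j + 1) = (R / 2 ^ j) / 2 := by rw [pow_succ]; ring
      have hpos : (0:ℝ) < R / 2 ^ (j + 1) := by positivity
      calc (R / 2 ^ (j+1+1)) ^ (-β) * (R / 2 ^ (j+1) : ℝ) ^ n
          = ((R / 2 ^ (j+1)) / 2) ^ (-β) * ((R / 2 ^ j) / 2 : ℝ) ^ n := by rw [← e1, ← e2]
        _ = ((R / 2 ^ (j+1)) ^ (-β) * 2 ^ β) * ((R / 2 ^ j : ℝ) ^ n / 2 ^ n) := by
            rw [half_rpow hpos, div_pow]
        _ = ((R / 2 ^ (j+1)) ^ (-β) * (R / 2 ^ j : ℝ) ^ n) * ((2:ℝ) ^ β / 2 ^ n) := by ring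
        _ = (R ^ (-β) * R ^ n * 2 ^ β) * ((2:ℝ) ^ β / 2 ^ n) ^ (j + 1) := by
            rw [ih, pow_succ]; ring
  calc ∫⁻ y in ball (0:V) R, ENNReal.ofReal (‖y‖ ^ (-β))
      ≤ ∫⁻ y in {(0:V)} ∪ ⋃ k, s k, ENNReal.ofReal (‖y‖ ^ (-β)) := lintegral_mono_set hcover
    _ ≤ (∫⁻ y in {(0:V)}, ENNReal.ofReal (‖y‖ ^ (-β))) +
          ∫⁻ y in ⋃ k, s k, ENNReal.ofReal (‖y‖ ^ (-β)) := lintegral_union_le _ _ _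
    _ = ∫⁻ y in ⋃ k, s k, ENNReal.ofReal (‖y‖ ^ (-β)) := by
        rw [setLIntegral_measure_zero _ _ (measure_singleton _), zero_add]
    _ ≤ ∑' k, ∫⁻ y in s k, ENNReal.ofReal (‖y‖ ^ (-β)) := lintegral_iUnion_le _ _
    _ ≤ ∑' k, ENNReal.ofReal ((R / 2 ^ (k+1)) ^ (-β) * (R / 2 ^ k) ^ n) * volume (ball (0:V) 1) :=
        ENNReal.tsum_le_tsum hterm
    _ = ∑' k, ENNReal.ofReal (R ^ (-β) * R ^ n * 2 ^ β) *
          ENNReal.ofReal ((2:ℝ) ^ β / 2 ^ n) ^ k * volume (ball (0:V) 1) := by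
        refine tsum_congr fun k => ?_
        rw [hgeo k, ENNReal.ofReal_mul (by positivity), ENNReal.ofReal_pow (by positivity)]
    _ = ENNReal.ofReal (R ^ (-β) * R ^ n * 2 ^ β) *
          (∑' k, ENNReal.ofReal ((2:ℝ) ^ β / 2 ^ n) ^ k) * volume (ball (0:V) 1) := by
        rw [ENNReal.tsum_mul_right, ENNReal.tsum_mul_left]
    _ = ENNReal.ofReal (R ^ (-β) * R ^ n * 2 ^ β) *
          (1 - ENNReal.ofReal ((2:ℝ) ^ β / 2 ^ n))⁻¹ * volume (ball (0:V) 1) := by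
        rw [ENNReal.tsum_geometric]

private lemma ball_rpow_bound {n : ℕ} (hn : 2 ≤ n) {β : ℝ} (hβ0 : 0 ≤ β) (hβn : β < n) :
    ∃ K : ℝ≥0∞, K ≠ ⊤ ∧ 1 ≤ K ∧ ∀ (x z : EuclideanSpace ℝ (Fin n)) (r : ℝ), 0 < r → z ≠ x →
      ∫⁻ y in ball x r, ENNReal.ofReal (‖y - z‖ ^ (-β)) ≤
        K * ENNReal.ofReal (‖x - z‖ ^ (-β)) * volume (ball x r) := by
  haveI : Nonempty (Fin n) := ⟨⟨0, by omega⟩⟩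
  set S : ℝ≥0∞ := (1 - ENNReal.ofReal ((2:ℝ) ^ β / 2 ^ n))⁻¹ with hS
  have hρ : ENNReal.ofReal ((2:ℝ) ^ β / 2 ^ n) < 1 := by
    rw [← ENNReal.ofReal_one]
    refine (ENNReal.ofReal_lt_ofReal_iff one_pos).2 ?_
    rw [div_lt_one (by positivity)]
    calc (2:ℝ) ^ β < 2 ^ (n:ℝ) := Real.rpow_lt_rpow_of_exponent_lt one_lt_two hβn
      _ = 2 ^ n := by rw [Real.rpow_natCast]
  have hStop : S ≠ ⊤ := by
    rw [hS, Ne, ENNReal.inv_eq_top, tsub_eq_zero_iff_le]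
    exact not_le.2 hρ
  refine ⟨ENNReal.ofReal ((2:ℝ) ^ β) +
    ENNReal.ofReal ((3:ℝ) ^ ((n:ℝ) - β) * 2 ^ β * 2 ^ β) * S + 1, ?_, ?_, ?_⟩
  · exact ENNReal.add_ne_top.2 ⟨ENNReal.add_ne_top.2 ⟨ENNReal.ofReal_ne_top,
      ENNReal.mul_ne_top ENNReal.ofReal_ne_top hStop⟩, ENNReal.one_ne_top⟩
  · exact le_add_self
  intro x z r hr hzx
  have hxz : (0:ℝ) < ‖x - z‖ := by
    rw [norm_pos_iff, sub_ne_zero]; exact fun h => hzx h.symm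
  rcases le_or_gt (2 * r) ‖x - z‖ with hfar | hnear
  · -- far case
    calc ∫⁻ y in ball x r, ENNReal.ofReal (‖y - z‖ ^ (-β))
        ≤ ∫⁻ _ in ball x r, ENNReal.ofReal (‖x - z‖ ^ (-β) * 2 ^ β) := by
          refine setLIntegral_mono' measurableSet_ball fun y hy => ?_
          refine ENNReal.ofReal_le_ofReal ?_
          rw [← half_rpow hxz]
          refine Real.rpow_le_rpow_of_nonpos (by positivity) ?_ (neg_nonpos.2 hβ0)
          have h1 : ‖x - z‖ ≤ ‖x - y‖ + ‖y - z‖ := by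
            calc ‖x - z‖ = ‖(x - y) + (y - z)‖ := by rw [sub_add_sub_cancel]
              _ ≤ ‖x - y‖ + ‖y - z‖ := norm_add_le _ _
          have h2 : ‖x - y‖ < r := by
            rw [mem_ball] at hy
            rw [← dist_eq_norm, dist_comm]
            exact hy
          linarith
      _ = ENNReal.ofReal (‖x - z‖ ^ (-β) * 2 ^ β) * volume (ball x r) := setLIntegral_const _ _
      _ ≤ (ENNReal.ofReal ((2:ℝ) ^ β) + ENNReal.ofReal ((3:ℝ) ^ ((n:ℝ) - β) * 2 ^ β * 2 ^ β) * S + 1) *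
            ENNReal.ofReal (‖x - z‖ ^ (-β)) * volume (ball x r) := by
          refine mul_le_mul_left ?_ _
          rw [ENNReal.ofReal_mul (by positivity), mul_comm]
          refine mul_le_mul_left ?_ _
          exact le_add_right (self_le_add_right _ _)
  · -- near case
    have htrans : ∫⁻ y in ball x r, ENNReal.ofReal (‖y - z‖ ^ (-β)) =
        ∫⁻ w in ball (x - z) r, ENNReal.ofReal (‖w‖ ^ (-β)) := by
      rw [← lintegral_indicator measurableSet_ball, ← lintegral_indicator measurableSet_ball]
      rw [← lintegral_add_right_eq_self
        (fun w => (ball (x - z) r).indicator (fun w => ENNReal.ofReal (‖w‖ ^ (-β))) w) (-z)]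
      refine lintegral_congr fun y => ?_
      have hmem : y + -z ∈ ball (x - z) r ↔ y ∈ ball x r := by
        simp only [mem_ball, dist_eq_norm]
        have e : y + -z - (x - z) = y - x := by abel
        rw [e]
      by_cases hy : y ∈ ball x r
      · rw [Set.indicator_of_mem hy, Set.indicator_of_mem (hmem.2 hy)]
        simp [sub_eq_add_neg]
      · rw [Set.indicator_of_notMem hy, Set.indicator_of_notMem (fun h => hy (hmem.1 h))]
    rw [htrans]
    have hsub : ball (x - z) r ⊆ ball (0 : EuclideanSpace ℝ (Fin n)) (3 * r) := by
      intro w hw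
      rw [mem_ball_zero_iff]
      rw [mem_ball, dist_eq_norm] at hw
      calc ‖w‖ = ‖(w - (x - z)) + (x - z)‖ := by rw [sub_add_cancel]
        _ ≤ ‖w - (x - z)‖ + ‖x - z‖ := norm_add_le _ _
        _ < r + 2 * r := by linarith
        _ = 3 * r := by ring
    have hcore := core_rpow_ball hn hβ0 (by positivity : (0:ℝ) < 3 * r)
    have hkey : (3*r) ^ (-β) * (3*r) ^ n * (2:ℝ) ^ β =
        ((3:ℝ) ^ ((n:ℝ) - β) * 2 ^ β * 2 ^ β) * ((2*r) ^ (-β) * r ^ n) := by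
      have h3r : (0:ℝ) < 3 * r := by positivity
      have e1 : (3*r : ℝ) ^ (-β) * (3*r) ^ n = (3:ℝ) ^ ((n:ℝ) - β) * r ^ ((n:ℝ) - β) := by
        rw [← Real.rpow_natCast (3*r) n, ← Real.rpow_add h3r, ← Real.mul_rpow (by norm_num) hr.le]
        congr 1
        ring
      have e2 : (2*r : ℝ) ^ (-β) * r ^ n = (2:ℝ) ^ (-β) * r ^ ((n:ℝ) - β) := by
        rw [Real.mul_rpow (by norm_num) hr.le, ← Real.rpow_natCast r n, mul_assoc,
          ← Real.rpow_add hr]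
        congr 2
        ring
      have e3 : (2:ℝ) ^ β * (2:ℝ) ^ (-β) = 1 := by
        rw [← Real.rpow_add two_pos]
        simp
      rw [e1, e2]
      calc (3:ℝ) ^ ((n:ℝ) - β) * r ^ ((n:ℝ) - β) * 2 ^ β
          = ((3:ℝ) ^ ((n:ℝ) - β) * r ^ ((n:ℝ) - β) * 2 ^ β) * ((2:ℝ) ^ β * (2:ℝ) ^ (-β)) := by
            rw [e3, mul_one]
        _ = (3:ℝ) ^ ((n:ℝ) - β) * 2 ^ β * 2 ^ β * ((2:ℝ) ^ (-β) * r ^ ((n:ℝ) - β)) := by ring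
    have hvol : volume (ball x r) =
        ENNReal.ofReal (r ^ n) * volume (ball (0 : EuclideanSpace ℝ (Fin n)) 1) := by
      rw [Measure.addHaar_ball volume _ hr.le, finrank_euclideanSpace_fin]
    have hxz2 : ENNReal.ofReal ((2*r) ^ (-β)) ≤ ENNReal.ofReal (‖x - z‖ ^ (-β)) :=
      ENNReal.ofReal_le_ofReal
        (Real.rpow_le_rpow_of_nonpos hxz hnear.le (neg_nonpos.2 hβ0))
    calc ∫⁻ w in ball (x - z) r, ENNReal.ofReal (‖w‖ ^ (-β))
        ≤ ∫⁻ w in ball (0 : EuclideanSpace ℝ (Fin n)) (3*r), ENNReal.ofReal (‖w‖ ^ (-β)) :=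
          lintegral_mono_set hsub
      _ ≤ ENNReal.ofReal ((3*r) ^ (-β) * (3*r) ^ n * 2 ^ β) * S *
            volume (ball (0 : EuclideanSpace ℝ (Fin n)) 1) := hcore
      _ = ENNReal.ofReal ((3:ℝ) ^ ((n:ℝ) - β) * 2 ^ β * 2 ^ β) * S *
            (ENNReal.ofReal ((2*r) ^ (-β)) * (ENNReal.ofReal (r ^ n) *
              volume (ball (0 : EuclideanSpace ℝ (Fin n)) 1))) := by
          rw [hkey, ENNReal.ofReal_mul
            (by positivity : (0:ℝ) ≤ (3:ℝ) ^ ((n:ℝ) - β) * 2 ^ β * 2 ^ β), ENNReal.ofReal_mul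
            (by positivity : (0:ℝ) ≤ (2*r:ℝ) ^ (-β))]
          ring
      _ ≤ (ENNReal.ofReal ((2:ℝ) ^ β) + ENNReal.ofReal ((3:ℝ) ^ ((n:ℝ) - β) * 2 ^ β * 2 ^ β) * S + 1) *
            (ENNReal.ofReal (‖x - z‖ ^ (-β)) * (ENNReal.ofReal (r ^ n) *
              volume (ball (0 : EuclideanSpace ℝ (Fin n)) 1))) := by
          refine mul_le_mul ?_ (mul_le_mul_left hxz2 _) zero_le zero_le
          exact le_add_right le_add_self
      _ = (ENNReal.ofReal ((2:ℝ) ^ β) + ENNReal.ofReal ((3:ℝ) ^ ((n:ℝ) - β) * 2 ^ β * 2 ^ β) * S + 1) *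
            ENNReal.ofReal (‖x - z‖ ^ (-β)) * volume (ball x r) := by
          rw [hvol]
          ring

/-- Theorem 4.1. If `f ≥ 0` is integrable with
`α = ∫ f < c_n` and `u₊ = logPot f`, then `e^{n u₊}` is an `A₁` weight with
constant depending only on `n` and `α`: every ball average of `e^{n u₊}` centered
at `x` is at most `C e^{n u₊(x)}` (equivalently `M(e^{n u₊}) ≤ C e^{n u₊}`). -/
theorem expLogPot_isA1
    (n : ℕ) (hn : 2 ≤ n) (α : ℝ) (hα : α < cN n) :
    ∃ C : ℝ, 0 < C ∧
      ∀ f : EuclideanSpace ℝ (Fin n) → ℝ,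
        Continuous f →
        (∀ y, 0 ≤ f y) →
        Integrable f →
        (∀ x : EuclideanSpace ℝ (Fin n),
          Integrable (fun y => Real.log (‖y‖ / ‖x - y‖) * f y)) →
        (∫ y, f y) = α →
        ∀ (x : EuclideanSpace ℝ (Fin n)) (r : ℝ), 0 < r →
          (volume (ball x r)).toReal⁻¹ *
              (∫ y in ball x r, Real.exp ((n : ℝ) * logPot n f y)) ≤
            C * Real.exp ((n : ℝ) * logPot n f x) := by
  haveI : Nonempty (Fin n) := ⟨⟨0, by omega⟩⟩
  haveI : Nontrivial (EuclideanSpace ℝ (Fin n)) := inferInstance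
  have hc : 0 < cN n := cN_pos hn
  have hcne : cN n ≠ 0 := hc.ne'
  rcases lt_or_ge α 0 with hα0 | hα0
  · refine ⟨1, one_pos, ?_⟩
    intro f hfc hf0 hfi hflog hfα x r hr
    exfalso
    have : 0 ≤ α := hfα ▸ integral_nonneg hf0
    linarith
  have hn0 : (0:ℝ) < (n:ℝ) := by
    have : (2:ℝ) ≤ (n:ℝ) := by exact_mod_cast hn
    linarith
  set β : ℝ := (n : ℝ) * α / cN n with hβ
  have hβ0 : 0 ≤ β := div_nonneg (mul_nonneg (Nat.cast_nonneg n) hα0) hc.le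
  have hβn : β < n := by
    rw [hβ, div_lt_iff₀ hc]
    nlinarith
  obtain ⟨K, hKtop, hK1, hKb⟩ := ball_rpow_bound hn hβ0 hβn
  have hK1R : (1:ℝ) ≤ K.toReal := by
    simpa using ENNReal.toReal_mono hKtop hK1
  refine ⟨K.toReal, lt_of_lt_of_le one_pos hK1R, ?_⟩
  intro f hfc hf0 hfi hflog hfα x r hr
  have hvol_pos : 0 < (volume (ball x r)).toReal :=
    ENNReal.toReal_pos (measure_ball_pos volume x hr).ne' measure_ball_lt_top.ne
  have hne : ∀ w : EuclideanSpace ℝ (Fin n), ∀ᵐ z : EuclideanSpace ℝ (Fin n), z ≠ w := by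
    intro w
    rw [ae_iff]
    simp only [ne_eq, not_not, Set.setOf_eq_eq_singleton]
    exact measure_singleton w
  rcases eq_or_lt_of_le hα0 with hα0' | hαpos
  · -- α = 0 : f is a.e. zero
    have hf0' : f =ᵐ[volume] 0 := by
      refine (integral_eq_zero_iff_of_nonneg hf0 hfi).1 ?_
      rw [hfα]
      exact hα0'.symm
    have hu0 : ∀ w, logPot n f w = 0 := by
      intro w
      have h : (fun z : EuclideanSpace ℝ (Fin n) => Real.log (‖z‖ / ‖w - z‖) * f z)
          =ᵐ[volume] 0 := by
        filter_upwards [hf0'] with z hz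
        simp [hz]
      simp only [logPot]
      rw [integral_eq_zero_of_ae h, mul_zero]
    simp only [hu0, mul_zero, Real.exp_zero]
    rw [setIntegral_const, smul_eq_mul, mul_one, mul_one, measureReal_def,
      inv_mul_cancel₀ hvol_pos.ne']
    exact hK1R
  · -- α > 0 : main case
    have hαofR0 : ENNReal.ofReal α ≠ 0 := by
      simp only [ne_eq, ENNReal.ofReal_eq_zero, not_le]
      exact hαpos
    have hαofRtop : ENNReal.ofReal α ≠ ⊤ := ENNReal.ofReal_ne_top
    set u : EuclideanSpace ℝ (Fin n) → ℝ := logPot n f with hu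
    have hlog2 : ∀ y, Integrable (fun z => Real.log (‖x - z‖ / ‖y - z‖) * f z) ∧
        (∫ z, Real.log (‖x - z‖ / ‖y - z‖) * f z) = cN n * u y - cN n * u x := by
      intro y
      have hae : (fun z : EuclideanSpace ℝ (Fin n) =>
          Real.log (‖z‖ / ‖y - z‖) * f z - Real.log (‖z‖ / ‖x - z‖) * f z)
          =ᵐ[volume] fun z => Real.log (‖x - z‖ / ‖y - z‖) * f z := by
        filter_upwards [hne 0, hne x, hne y] with z h0 hx' hy'
        have n0 : ‖z‖ ≠ 0 := norm_ne_zero_iff.2 h0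
        have nx : ‖x - z‖ ≠ 0 := norm_ne_zero_iff.2 (sub_ne_zero.2 (Ne.symm hx'))
        have ny : ‖y - z‖ ≠ 0 := norm_ne_zero_iff.2 (sub_ne_zero.2 (Ne.symm hy'))
        rw [Real.log_div n0 ny, Real.log_div n0 nx, Real.log_div nx ny]
        ring
      refine ⟨((hflog y).sub (hflog x)).congr hae, ?_⟩
      have h1 : (∫ z, Real.log (‖x - z‖ / ‖y - z‖) * f z)
          = (∫ z, Real.log (‖z‖ / ‖y - z‖) * f z) - ∫ z, Real.log (‖z‖ / ‖x - z‖) * f z := by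
        rw [← integral_sub (hflog y) (hflog x)]
        exact (integral_congr_ae hae).symm
      rw [h1]
      simp only [hu, logPot]
      field_simp
    have step1 : ∀ y, ENNReal.ofReal (Real.exp ((n:ℝ) * u y)) ≤
        (ENNReal.ofReal (Real.exp ((n:ℝ) * u x)) * (ENNReal.ofReal α)⁻¹) *
          ∫⁻ z, ENNReal.ofReal (Real.exp (β * Real.log (‖x - z‖ / ‖y - z‖)) * f z) := by
      intro y
      obtain ⟨hIint, hIval⟩ := hlog2 y
      set m : ℝ := ((n:ℝ) / cN n) * ∫ z, Real.log (‖x - z‖ / ‖y - z‖) * f z with hm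
      have hrel : (n:ℝ) * u y = (n:ℝ) * u x + m := by
        rw [hm, hIval]
        field_simp
        ring
      have hkey : ENNReal.ofReal α * ENNReal.ofReal (Real.exp m) ≤
          ∫⁻ z, ENNReal.ofReal (Real.exp (β * Real.log (‖x - z‖ / ‖y - z‖)) * f z) := by
        set g : EuclideanSpace ℝ (Fin n) → ℝ := fun z => Real.exp m * ((1 - m) * f z +
          β * (Real.log (‖x - z‖ / ‖y - z‖) * f z)) with hg
        have hgint : Integrable g :=
          ((hfi.const_mul (1 - m)).add (hIint.const_mul β)).const_mul (Real.exp m)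
        have hβI : β * (∫ z, Real.log (‖x - z‖ / ‖y - z‖) * f z) = m * α := by
          rw [hm, hβ]
          ring
        have hgval : (∫ z, g z) = α * Real.exp m := by
          simp only [hg]
          rw [integral_const_mul, integral_add (hfi.const_mul _) (hIint.const_mul β),
            integral_const_mul, integral_const_mul, hfα, hβI]
          ring
        calc ENNReal.ofReal α * ENNReal.ofReal (Real.exp m)
            = ENNReal.ofReal (∫ z, g z) := by
              rw [hgval, ENNReal.ofReal_mul hα0]
          _ ≤ ∫⁻ z, ENNReal.ofReal (g z) := ofReal_integral_le hgint
          _ ≤ ∫⁻ z, ENNReal.ofReal (Real.exp (β * Real.log (‖x - z‖ / ‖y - z‖)) * f z) := by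
              refine lintegral_mono fun z => ENNReal.ofReal_le_ofReal ?_
              have h1 := exp_tangent m (β * Real.log (‖x - z‖ / ‖y - z‖))
              have h2 : g z = (Real.exp m * (1 + β * Real.log (‖x - z‖ / ‖y - z‖) - m)) * f z := by
                simp only [hg]
                ring
              rw [h2]
              exact mul_le_mul_of_nonneg_right h1 (hf0 z)
      have hsplit : ENNReal.ofReal (Real.exp ((n:ℝ) * u y)) =
          ENNReal.ofReal (Real.exp ((n:ℝ) * u x)) * ENNReal.ofReal (Real.exp m) := by
        rw [hrel, Real.exp_add, ENNReal.ofReal_mul (Real.exp_nonneg _)]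
      rw [hsplit, mul_assoc]
      refine mul_le_mul_right ?_ _
      calc ENNReal.ofReal (Real.exp m)
          = (ENNReal.ofReal α)⁻¹ * (ENNReal.ofReal α * ENNReal.ofReal (Real.exp m)) := by
            rw [← mul_assoc, ENNReal.inv_mul_cancel hαofR0 hαofRtop, one_mul]
        _ ≤ (ENNReal.ofReal α)⁻¹ *
              ∫⁻ z, ENNReal.ofReal (Real.exp (β * Real.log (‖x - z‖ / ‖y - z‖)) * f z) :=
            mul_le_mul_right hkey _
    have hFmeas : AEMeasurable (Function.uncurry fun (y z : EuclideanSpace ℝ (Fin n)) =>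
        ENNReal.ofReal (Real.exp (β * Real.log (‖x - z‖ / ‖y - z‖)) * f z))
        ((volume.restrict (ball x r)).prod volume) := by
      apply Measurable.aemeasurable
      apply Measurable.ennreal_ofReal
      apply Measurable.mul
      · exact Real.continuous_exp.measurable.comp ((Real.measurable_log.comp
          ((((continuous_const.sub continuous_snd).norm.measurable)).div
            ((continuous_fst.sub continuous_snd).norm.measurable))).const_mul β)
      · exact hfc.measurable.comp continuous_snd.measurable
    have inner_bound : ∀ z, (∫⁻ y in ball x r,
        ENNReal.ofReal (Real.exp (β * Real.log (‖x - z‖ / ‖y - z‖)) * f z)) ≤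
          (K * volume (ball x r)) * ENNReal.ofReal (f z) := by
      intro z
      have hsplit : ∀ y : EuclideanSpace ℝ (Fin n),
          ENNReal.ofReal (Real.exp (β * Real.log (‖x - z‖ / ‖y - z‖)) * f z)
          = ENNReal.ofReal (Real.exp (β * Real.log (‖x - z‖ / ‖y - z‖))) * ENNReal.ofReal (f z) :=
        fun y => ENNReal.ofReal_mul (Real.exp_nonneg _)
      simp only [hsplit]
      rw [lintegral_mul_const' _ _ ENNReal.ofReal_ne_top]
      refine mul_le_mul_left ?_ _
      by_cases hzx : z = x
      · subst hzx
        simp only [sub_self, norm_zero, zero_div, Real.log_zero, mul_zero, Real.exp_zero,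
          ENNReal.ofReal_one]
        rw [setLIntegral_one]
        calc volume (ball z r) = 1 * volume (ball z r) := (one_mul _).symm
          _ ≤ K * volume (ball z r) := mul_le_mul_left hK1 _
      · have hxz : (0:ℝ) < ‖x - z‖ := norm_pos_iff.2 (sub_ne_zero.2 (Ne.symm hzx))
        have hae : ∀ᵐ y ∂(volume.restrict (ball x r)),
            ENNReal.ofReal (Real.exp (β * Real.log (‖x - z‖ / ‖y - z‖)))
              = ENNReal.ofReal (‖x - z‖ ^ β) * ENNReal.ofReal (‖y - z‖ ^ (-β)) := by
          refine ae_restrict_of_ae ?_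
          filter_upwards [hne z] with y hy
          have hyz : (0:ℝ) < ‖y - z‖ := norm_pos_iff.2 (sub_ne_zero.2 hy)
          rw [show Real.exp (β * Real.log (‖x - z‖ / ‖y - z‖)) = (‖x - z‖ / ‖y - z‖) ^ β from by
            rw [Real.rpow_def_of_pos (div_pos hxz hyz), mul_comm]]
          rw [Real.div_rpow hxz.le hyz.le, Real.rpow_neg hyz.le, div_eq_mul_inv,
            ENNReal.ofReal_mul (Real.rpow_nonneg hxz.le _)]
        rw [lintegral_congr_ae hae, lintegral_const_mul' _ _ ENNReal.ofReal_ne_top]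
        calc ENNReal.ofReal (‖x - z‖ ^ β) * ∫⁻ y in ball x r, ENNReal.ofReal (‖y - z‖ ^ (-β))
            ≤ ENNReal.ofReal (‖x - z‖ ^ β) *
                (K * ENNReal.ofReal (‖x - z‖ ^ (-β)) * volume (ball x r)) :=
              mul_le_mul_right (hKb x z r hr hzx) _
          _ = (K * volume (ball x r)) *
                (ENNReal.ofReal (‖x - z‖ ^ β) * ENNReal.ofReal (‖x - z‖ ^ (-β))) := by ring
          _ = K * volume (ball x r) := by
              rw [← ENNReal.ofReal_mul (Real.rpow_nonneg hxz.le _), ← Real.rpow_add hxz]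
              simp
    have main : (∫⁻ y in ball x r, ENNReal.ofReal (Real.exp ((n:ℝ) * u y))) ≤
        K * ENNReal.ofReal (Real.exp ((n:ℝ) * u x)) * volume (ball x r) := by
      have hc2 : (ENNReal.ofReal (Real.exp ((n:ℝ) * u x)) * (ENNReal.ofReal α)⁻¹) ≠ ⊤ :=
        ENNReal.mul_ne_top ENNReal.ofReal_ne_top (ENNReal.inv_ne_top.2 hαofR0)
      have hswap : (∫⁻ y in ball x r,
          ∫⁻ z, ENNReal.ofReal (Real.exp (β * Real.log (‖x - z‖ / ‖y - z‖)) * f z)) =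
          ∫⁻ z, ∫⁻ y in ball x r,
            ENNReal.ofReal (Real.exp (β * Real.log (‖x - z‖ / ‖y - z‖)) * f z) :=
        lintegral_lintegral_swap hFmeas
      calc (∫⁻ y in ball x r, ENNReal.ofReal (Real.exp ((n:ℝ) * u y)))
          ≤ ∫⁻ y in ball x r, (ENNReal.ofReal (Real.exp ((n:ℝ) * u x)) * (ENNReal.ofReal α)⁻¹) *
              ∫⁻ z, ENNReal.ofReal (Real.exp (β * Real.log (‖x - z‖ / ‖y - z‖)) * f z) :=
            lintegral_mono fun y => step1 y
        _ = (ENNReal.ofReal (Real.exp ((n:ℝ) * u x)) * (ENNReal.ofReal α)⁻¹) *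
              ∫⁻ y in ball x r,
                ∫⁻ z, ENNReal.ofReal (Real.exp (β * Real.log (‖x - z‖ / ‖y - z‖)) * f z) :=
            lintegral_const_mul' _ _ hc2
        _ = (ENNReal.ofReal (Real.exp ((n:ℝ) * u x)) * (ENNReal.ofReal α)⁻¹) *
              ∫⁻ z, ∫⁻ y in ball x r,
                ENNReal.ofReal (Real.exp (β * Real.log (‖x - z‖ / ‖y - z‖)) * f z) := by
            rw [hswap]
        _ ≤ (ENNReal.ofReal (Real.exp ((n:ℝ) * u x)) * (ENNReal.ofReal α)⁻¹) *
              ∫⁻ z, (K * volume (ball x r)) * ENNReal.ofReal (f z) :=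
            mul_le_mul_right (lintegral_mono inner_bound) _
        _ = (ENNReal.ofReal (Real.exp ((n:ℝ) * u x)) * (ENNReal.ofReal α)⁻¹) *
              ((K * volume (ball x r)) * ∫⁻ z, ENNReal.ofReal (f z)) := by
            rw [lintegral_const_mul' _ _ (ENNReal.mul_ne_top hKtop measure_ball_lt_top.ne)]
        _ = (ENNReal.ofReal (Real.exp ((n:ℝ) * u x)) * (ENNReal.ofReal α)⁻¹) *
              ((K * volume (ball x r)) * ENNReal.ofReal α) := by
            rw [← ofReal_integral_eq_lintegral_ofReal hfi (ae_of_all _ hf0), hfα]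
        _ = (K * ENNReal.ofReal (Real.exp ((n:ℝ) * u x)) * volume (ball x r)) *
              ((ENNReal.ofReal α)⁻¹ * ENNReal.ofReal α) := by ring
        _ = K * ENNReal.ofReal (Real.exp ((n:ℝ) * u x)) * volume (ball x r) := by
            rw [ENNReal.inv_mul_cancel hαofR0 hαofRtop, mul_one]
    by_cases hInt : IntegrableOn (fun y => Real.exp ((n:ℝ) * u y)) (ball x r) volume
    · have heq : (∫ y in ball x r, Real.exp ((n:ℝ) * u y))
          = (∫⁻ y in ball x r, ENNReal.ofReal (Real.exp ((n:ℝ) * u y))).toReal := by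
        rw [← ofReal_integral_eq_lintegral_ofReal hInt (ae_of_all _ fun y => Real.exp_nonneg _),
          ENNReal.toReal_ofReal (integral_nonneg fun y => Real.exp_nonneg _)]
      rw [heq]
      have hb := ENNReal.toReal_mono (ENNReal.mul_ne_top (ENNReal.mul_ne_top hKtop
        ENNReal.ofReal_ne_top) measure_ball_lt_top.ne) main
      rw [ENNReal.toReal_mul, ENNReal.toReal_mul,
        ENNReal.toReal_ofReal (Real.exp_nonneg _)] at hb
      calc (volume (ball x r)).toReal⁻¹ *
            (∫⁻ y in ball x r, ENNReal.ofReal (Real.exp ((n:ℝ) * u y))).toReal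
          ≤ (volume (ball x r)).toReal⁻¹ *
              (K.toReal * Real.exp ((n:ℝ) * u x) * (volume (ball x r)).toReal) :=
            mul_le_mul_of_nonneg_left hb (by positivity)
        _ = K.toReal * Real.exp ((n:ℝ) * u x) *
              ((volume (ball x r)).toReal⁻¹ * (volume (ball x r)).toReal) := by ring
        _ = K.toReal * Real.exp ((n:ℝ) * u x) := by
            rw [inv_mul_cancel₀ hvol_pos.ne', mul_one]
    · rw [integral_undef hInt, mul_zero]
      positivity
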